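/- For every N ≥ 2, the word 0·rev(c_4)·rev(c_6)⋯rev(c_{2N}) (the letter 0 followed by the concatenation of the even-indexed upper Christoffel words) is a prefix of the Fibonacci infinite word f. In other words, f = 0·∏_{n≥2} rev(c_{2n}). -/

import Mathlib

/-- The finite Fibonacci words over the alphabet {0,1}: f 1 = 1, f 2 = 0,
and f n = f (n-1) ++ f (n-2) for n ≥ 3. -/
def fibWord : ℕ → List ℕ
  | 0 => []
  | 1 => [1]
  | 2 => [0]
  | n + 3 => fibWord (n + 2) ++ fibWord (n + 1)

/-- A finite word is a prefix of the Fibonacci infinite word iff it is a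
prefix of some finite Fibonacci word f m with m ≥ 2. -/
def IsFibPrefix (x : List ℕ) : Prop := ∃ m, 2 ≤ m ∧ x <+: fibWord m

/-- The central word p n: the Fibonacci word f n with its last two letters removed. -/
def centralWord (n : ℕ) : List ℕ := (fibWord n).dropLast.dropLast

/-- The lower Christoffel word c n = 0 · p n · 1, for n ≥ 3. -/
def chrisWord (n : ℕ) : List ℕ := [0] ++ centralWord n ++ [1]

lemma fib_len (n : ℕ) : 2 ≤ (fibWord (n + 3)).length := by
  induction n with
  | zero => decide
  | succ k ih =>
      show 2 ≤ (fibWord (k + 3) ++ fibWord (k + 2)).length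
      rw [List.length_append]
      omega

lemma central_rec (n : ℕ) : centralWord (n + 5) = fibWord (n + 4) ++ centralWord (n + 3) := by
  have h2 : 2 ≤ (fibWord (n + 3)).length := fib_len n
  show (fibWord (n + 4) ++ fibWord (n + 3)).dropLast.dropLast = _
  have hne : fibWord (n + 3) ≠ [] := by
    intro h; rw [h] at h2; simp at h2
  have hne2 : (fibWord (n + 3)).dropLast ≠ [] := by
    intro h
    have := congrArg List.length h
    rw [List.length_dropLast] at this
    simp at this; omega
  rw [List.dropLast_append_of_ne_nil hne, List.dropLast_append_of_ne_nil hne2]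
  rfl

lemma swapR (n : ℕ) :
    fibWord (n + 3) ++ centralWord (n + 4) = fibWord (n + 4) ++ centralWord (n + 3) := by
  induction n with
  | zero => decide
  | succ k ih =>
      have h5 : centralWord (k + 5) = fibWord (k + 4) ++ centralWord (k + 3) := central_rec k
      show fibWord (k + 4) ++ centralWord (k + 5) = (fibWord (k+4) ++ fibWord (k+3)) ++ centralWord (k + 4)
      rw [h5, List.append_assoc, ← ih]

lemma split2 (k : ℕ) :
    fibWord (2 * k + 3) = centralWord (2 * k + 3) ++ [0, 1] ∧
    fibWord (2 * k + 4) = centralWord (2 * k + 4) ++ [1, 0] := by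
  induction k with
  | zero => decide
  | succ m ih =>
      obtain ⟨h1, h2⟩ := ih
      have e1 : 2 * (m + 1) + 3 = (2 * m) + 5 := by ring
      have e2 : 2 * (m + 1) + 4 = (2 * m + 1) + 5 := by ring
      constructor
      · rw [e1]
        show fibWord (2*m+4) ++ fibWord (2*m+3) = _
        rw [central_rec (2*m), h1, List.append_assoc]
      · rw [e2]
        show fibWord (2*m+5) ++ fibWord (2*m+4) = _
        rw [central_rec (2*m+1), h2, List.append_assoc]

lemma rev2 (k : ℕ) :
    (fibWord (2 * k + 3)).reverse = [1, 0] ++ centralWord (2 * k + 3) ∧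
    (fibWord (2 * k + 4)).reverse = [0, 1] ++ centralWord (2 * k + 4) := by
  induction k with
  | zero => decide
  | succ m ih =>
      obtain ⟨h1, h2⟩ := ih
      have s1 := (split2 m).1
      have s2 := (split2 m).2
      have e1 : 2 * (m + 1) + 3 = (2 * m) + 5 := by ring
      have e2 : 2 * (m + 1) + 4 = (2 * m + 1) + 5 := by ring
      have r5 : (fibWord (2*m+5)).reverse = [1,0] ++ centralWord (2*m+5) := by
        show (fibWord (2*m+4) ++ fibWord (2*m+3)).reverse = _
        rw [List.reverse_append, h1, h2, central_rec (2*m)]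
        -- [1,0] ++ p(2m+3) ++ ([0,1] ++ p(2m+4)) = [1,0] ++ (f(2m+4) ++ p(2m+3))
        have : centralWord (2*m+3) ++ ([0,1] ++ centralWord (2*m+4))
            = fibWord (2*m+4) ++ centralWord (2*m+3) := by
          rw [← swapR (2*m)]
          conv_rhs => rw [s1]
          simp [List.append_assoc]
        simp only [List.append_assoc] at this ⊢
        rw [this]
      constructor
      · rw [e1]; exact r5
      · rw [e2]
        show (fibWord (2*m+5) ++ fibWord (2*m+4)).reverse = _
        rw [List.reverse_append, h2, r5, central_rec (2*m+1)]
        have : centralWord (2*m+4) ++ ([1,0] ++ centralWord (2*m+5))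
            = fibWord (2*m+5) ++ centralWord (2*m+4) := by
          rw [← swapR (2*m+1)]
          conv_rhs => rw [s2]
          simp [List.append_assoc]
        show [0,1] ++ (centralWord (2*m+4) ++ ([1,0] ++ centralWord (2*m+5))) = _
        rw [this]

lemma pal_even (k : ℕ) : (centralWord (2 * k + 4)).reverse = centralWord (2 * k + 4) := by
  have s2 := (split2 k).2
  have r2 := (rev2 k).2
  have : (fibWord (2*k+4)).reverse = [0,1] ++ (centralWord (2*k+4)).reverse := by
    rw [s2, List.reverse_append]; rfl
  rw [this] at r2
  exact List.append_cancel_left r2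

lemma rev_chris (k : ℕ) :
    (chrisWord (2 * k + 4)).reverse = [1] ++ centralWord (2 * k + 4) ++ [0] := by
  show ([0] ++ centralWord (2*k+4) ++ [1]).reverse = _
  rw [List.reverse_append, List.reverse_append, pal_even k]
  rfl

lemma main_eq (k : ℕ) :
    [0] ++ ((List.range (k + 1)).map (fun i => (chrisWord (2 * (i + 2))).reverse)).flatten
      = (fibWord (2 * (k + 2) + 1)).dropLast := by
  induction k with
  | zero => decide
  | succ m ih =>
      have key : (fibWord (2*(m+2)+1)).dropLast ++ (chrisWord (2*(m+1+2))).reverse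
          = (fibWord (2*(m+1+2)+1)).dropLast := by
        rw [show 2*(m+2)+1 = 2*m+5 from by ring, show 2*(m+1+2) = 2*m+6 from by ring,
            show 2*m+6+1 = 2*m+7 from rfl]
        have s5 := (split2 (m+1)).1
        have s7 := (split2 (m+2)).1
        rw [show 2*(m+1)+3 = 2*m+5 from by ring] at s5
        rw [show 2*(m+2)+3 = 2*m+7 from by ring] at s7
        have rc := rev_chris (m+1)
        rw [show 2*(m+1)+4 = 2*m+6 from by ring] at rc
        have sw := swapR (2*m+2)
        have cr := central_rec (2*m+2)
        calc (fibWord (2*m+5)).dropLast ++ (chrisWord (2*m+6)).reverse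
            = (centralWord (2*m+5) ++ [0]) ++ ([1] ++ centralWord (2*m+6) ++ [0]) := by
              rw [s5, rc, List.dropLast_append_of_ne_nil (by simp)]; rfl
          _ = (fibWord (2*m+5) ++ centralWord (2*m+6)) ++ [0] := by
              rw [s5]; simp [List.append_assoc]
          _ = (fibWord (2*m+6) ++ centralWord (2*m+5)) ++ [0] := by rw [sw]
          _ = centralWord (2*m+7) ++ [0] := by rw [← cr]
          _ = (fibWord (2*m+7)).dropLast := by
              rw [s7, List.dropLast_append_of_ne_nil (by simp)]; rfl
      rw [List.range_succ, List.map_append, List.flatten_append, ← List.append_assoc, ih]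
      simp only [List.map_cons, List.map_nil, List.flatten_cons, List.flatten_nil,
        List.append_nil]
      exact key

theorem stmt13 (N : ℕ) (hN : 2 ≤ N) :
    IsFibPrefix ([0] ++
      ((List.range (N - 1)).map (fun i => (chrisWord (2 * (i + 2))).reverse)).flatten) := by
  obtain ⟨k, rfl⟩ : ∃ k, N = k + 2 := ⟨N - 2, by omega⟩
  refine ⟨2 * (k + 2) + 1, by omega, ?_⟩
  rw [show k + 2 - 1 = k + 1 from rfl, main_eq k]
  exact List.dropLast_prefix _
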